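/- Let u ∈ ℝ^N, φ_{abc} = u_a·δ_{bc}, D' = λ_d + λ_p·(N·α₁ + α₂ + α₃) + N^{1/2}·λ_t, and assume the solution condition λ₂ + (D'/N²)·|u|² = 0. Then the Hessian of V at φ has the following zero modes: (1) for any antisymmetric matrix A ∈ ℝ^{N×N} (A_{bc} = −A_{cb}), the tensor field χ_{abc} = u_a·A_{bc} satisfies H(φ)χ = 0; (2) for any u' ∈ ℝ^N with ⟨u',u⟩ = 0, the tensor field χ'_{abc} = u'_a·δ_{bc} satisfies H(φ)χ' = 0. -/

import Mathlib

open Finset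

/-- The potential of the quartic `O(N)^3` tensor model. -/
noncomputable def potV (N : ℕ) (l2 ld lp lt a1 a2 a3 : ℝ)
    (φ : Fin N → Fin N → Fin N → ℝ) : ℝ :=
  l2 / 2 * (∑ a, ∑ b, ∑ c, (φ a b c) ^ 2)
  + ld / (4 * (N : ℝ) ^ 3) * (∑ a, ∑ b, ∑ c, (φ a b c) ^ 2) ^ 2
  + lp / (4 * (N : ℝ) ^ 2) *
      (a1 * ∑ a, ∑ b, ∑ c, ∑ a', ∑ b', ∑ c',
          φ a b c * φ a b' c' * φ a' b' c' * φ a' b c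
       + a2 * ∑ a, ∑ b, ∑ c, ∑ a', ∑ b', ∑ c',
          φ a b c * φ a' b c' * φ a' b' c' * φ a b' c
       + a3 * ∑ a, ∑ b, ∑ c, ∑ a', ∑ b', ∑ c',
          φ a b c * φ a' b' c * φ a' b' c' * φ a b c')
  + lt / (4 * (N : ℝ) ^ ((3 : ℝ) / 2)) *
      ∑ a, ∑ b, ∑ c, ∑ a', ∑ b', ∑ c',
        φ a b c * φ a b' c' * φ a' b c' * φ a' b' c

/-- The field equations of the quartic `O(N)^3` tensor model (vanishing gradient of `potV`). -/
def FieldEqs (N : ℕ) (l2 ld lp lt a1 a2 a3 : ℝ)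
    (φ : Fin N → Fin N → Fin N → ℝ) : Prop :=
  ∀ a b c,
    l2 * φ a b c
    + ld / (N : ℝ) ^ 3 * (∑ a', ∑ b', ∑ c', (φ a' b' c') ^ 2) * φ a b c
    + lp / (N : ℝ) ^ 2 *
        (a1 * ∑ a', ∑ b', ∑ c', φ a b' c' * φ a' b' c' * φ a' b c
         + a2 * ∑ a', ∑ b', ∑ c', φ a' b c' * φ a' b' c' * φ a b' c
         + a3 * ∑ a', ∑ b', ∑ c', φ a' b' c * φ a' b' c' * φ a b c')
    + lt / (N : ℝ) ^ ((3 : ℝ) / 2) *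
        ∑ a', ∑ b', ∑ c', φ a b' c' * φ a' b c' * φ a' b' c = 0

/-- The Hessian of `potV` at `φ` (the matrix of second partial derivatives
`H(φ)_{abc,a'b'c'} = ∂²V/∂φ_{abc}∂φ_{a'b'c'}`), acting on a tensor field `χ` by
`(H(φ)χ)_{abc} = Σ_{a'b'c'} H(φ)_{abc,a'b'c'} χ_{a'b'c'}`. -/
noncomputable def hessApply (N : ℕ) (l2 ld lp lt a1 a2 a3 : ℝ)
    (φ χ : Fin N → Fin N → Fin N → ℝ) : Fin N → Fin N → Fin N → ℝ :=
  fun a b c =>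
    deriv (fun s : ℝ =>
      deriv (fun t : ℝ =>
        potV N l2 ld lp lt a1 a2 a3
          (fun a' b' c' => φ a' b' c' + t * χ a' b' c'
            + s * (if a' = a ∧ b' = b ∧ c' = c then (1 : ℝ) else 0))) 0) 0



lemma affD (A B : ℝ) : HasDerivAt (fun t : ℝ => A + t * B) B 0 := by
  simpa using ((hasDerivAt_id (0:ℝ)).mul_const B).const_add A

lemma sqD (A B : ℝ) : HasDerivAt (fun t : ℝ => (A + t * B) ^ 2) (2 * A * B) 0 := by
  have h := (affD A B).pow 2
  norm_num at h
  exact h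

lemma prod4AffD (A1 B1 A2 B2 A3 B3 A4 B4 : ℝ) :
    HasDerivAt (fun t : ℝ => (A1 + t * B1) * (A2 + t * B2) * (A3 + t * B3) * (A4 + t * B4))
      (B1 * A2 * A3 * A4 + A1 * B2 * A3 * A4 + A1 * A2 * B3 * A4 + A1 * A2 * A3 * B4) 0 := by
  have h := (((affD A1 B1).fun_mul (affD A2 B2)).fun_mul (affD A3 B3)).fun_mul (affD A4 B4)
  simp only [zero_mul, add_zero] at h
  convert! h using 1
  ring

lemma cp1 (C A2 B2 A3 B3 A4 B4 : ℝ) :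
    HasDerivAt (fun s : ℝ => C * (A2 + s * B2) * (A3 + s * B3) * (A4 + s * B4))
      (C * B2 * A3 * A4 + C * A2 * B3 * A4 + C * A2 * A3 * B4) 0 := by
  have h := (((hasDerivAt_const (0:ℝ) C).fun_mul (affD A2 B2)).fun_mul (affD A3 B3)).fun_mul (affD A4 B4)
  simp only [zero_mul, add_zero, mul_zero, zero_add] at h
  convert! h using 1
  ring

lemma cp2 (A1 B1 C A3 B3 A4 B4 : ℝ) :
    HasDerivAt (fun s : ℝ => (A1 + s * B1) * C * (A3 + s * B3) * (A4 + s * B4))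
      (B1 * C * A3 * A4 + A1 * C * B3 * A4 + A1 * C * A3 * B4) 0 := by
  have h := (((affD A1 B1).fun_mul (hasDerivAt_const (0:ℝ) C)).fun_mul (affD A3 B3)).fun_mul (affD A4 B4)
  simp only [zero_mul, add_zero, mul_zero, zero_add] at h
  convert! h using 1
  ring

lemma cp3 (A1 B1 A2 B2 C A4 B4 : ℝ) :
    HasDerivAt (fun s : ℝ => (A1 + s * B1) * (A2 + s * B2) * C * (A4 + s * B4))
      (B1 * A2 * C * A4 + A1 * B2 * C * A4 + A1 * A2 * C * B4) 0 := by
  have h := (((affD A1 B1).fun_mul (affD A2 B2)).fun_mul (hasDerivAt_const (0:ℝ) C)).fun_mul (affD A4 B4)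
  simp only [zero_mul, add_zero, mul_zero, zero_add] at h
  convert! h using 1
  ring

lemma cp4 (A1 B1 A2 B2 A3 B3 C : ℝ) :
    HasDerivAt (fun s : ℝ => (A1 + s * B1) * (A2 + s * B2) * (A3 + s * B3) * C)
      (B1 * A2 * A3 * C + A1 * B2 * A3 * C + A1 * A2 * B3 * C) 0 := by
  have h := (((affD A1 B1).fun_mul (affD A2 B2)).fun_mul (affD A3 B3)).fun_mul (hasDerivAt_const (0:ℝ) C)
  simp only [zero_mul, add_zero, mul_zero, zero_add] at h
  convert! h using 1
  ring

lemma lin2 (A B C : ℝ) : HasDerivAt (fun s : ℝ => 2 * (A + s * B) * C) (2 * B * C) 0 :=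
  ((affD A B).const_mul 2).mul_const C


noncomputable def dV1 (N : ℕ) (l2 ld lp lt a1 a2 a3 : ℝ)
    (ψ x : Fin N → Fin N → Fin N → ℝ) : ℝ :=
  l2 / 2 * (∑ a, ∑ b, ∑ c, 2 * ψ a b c * x a b c)
  + ld / (4 * (N : ℝ) ^ 3) * (2 * (∑ a, ∑ b, ∑ c, ψ a b c ^ 2) * (∑ a, ∑ b, ∑ c, 2 * ψ a b c * x a b c))
  + lp / (4 * (N : ℝ) ^ 2) *
      (a1 * (∑ a, ∑ b, ∑ c, ∑ a', ∑ b', ∑ c', (x a b c * ψ a b' c' * ψ a' b' c' * ψ a' b c + ψ a b c * x a b' c' * ψ a' b' c' * ψ a' b c + ψ a b c * ψ a b' c' * x a' b' c' * ψ a' b c + ψ a b c * ψ a b' c' * ψ a' b' c' * x a' b c))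
       + a2 * (∑ a, ∑ b, ∑ c, ∑ a', ∑ b', ∑ c', (x a b c * ψ a' b c' * ψ a' b' c' * ψ a b' c + ψ a b c * x a' b c' * ψ a' b' c' * ψ a b' c + ψ a b c * ψ a' b c' * x a' b' c' * ψ a b' c + ψ a b c * ψ a' b c' * ψ a' b' c' * x a b' c))
       + a3 * (∑ a, ∑ b, ∑ c, ∑ a', ∑ b', ∑ c', (x a b c * ψ a' b' c * ψ a' b' c' * ψ a b c' + ψ a b c * x a' b' c * ψ a' b' c' * ψ a b c' + ψ a b c * ψ a' b' c * x a' b' c' * ψ a b c' + ψ a b c * ψ a' b' c * ψ a' b' c' * x a b c')))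
  + lt / (4 * (N : ℝ) ^ ((3 : ℝ) / 2)) * (∑ a, ∑ b, ∑ c, ∑ a', ∑ b', ∑ c', (x a b c * ψ a b' c' * ψ a' b c' * ψ a' b' c + ψ a b c * x a b' c' * ψ a' b c' * ψ a' b' c + ψ a b c * ψ a b' c' * x a' b c' * ψ a' b' c + ψ a b c * ψ a b' c' * ψ a' b c' * x a' b' c))


noncomputable def dV2 (N : ℕ) (l2 ld lp lt a1 a2 a3 : ℝ)
    (ψ y x : Fin N → Fin N → Fin N → ℝ) : ℝ :=
  l2 / 2 * (∑ a, ∑ b, ∑ c, 2 * y a b c * x a b c)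
  + ld / (4 * (N : ℝ) ^ 3) * (2 * (∑ a, ∑ b, ∑ c, 2 * ψ a b c * y a b c) * (∑ a, ∑ b, ∑ c, 2 * ψ a b c * x a b c) + 2 * (∑ a, ∑ b, ∑ c, ψ a b c ^ 2) * (∑ a, ∑ b, ∑ c, 2 * y a b c * x a b c))
  + lp / (4 * (N : ℝ) ^ 2) *
      (a1 * (∑ a, ∑ b, ∑ c, ∑ a', ∑ b', ∑ c', (x a b c * y a b' c' * ψ a' b' c' * ψ a' b c + x a b c * ψ a b' c' * y a' b' c' * ψ a' b c + x a b c * ψ a b' c' * ψ a' b' c' * y a' b c + (y a b c * x a b' c' * ψ a' b' c' * ψ a' b c + ψ a b c * x a b' c' * y a' b' c' * ψ a' b c + ψ a b c * x a b' c' * ψ a' b' c' * y a' b c) + (y a b c * ψ a b' c' * x a' b' c' * ψ a' b c + ψ a b c * y a b' c' * x a' b' c' * ψ a' b c + ψ a b c * ψ a b' c' * x a' b' c' * y a' b c) + (y a b c * ψ a b' c' * ψ a' b' c' * x a' b c + ψ a b c * y a b' c' * ψ a' b' c' * x a' b c + ψ a b c * ψ a b' c' * y a' b' c' * x a' b c)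))
       + a2 * (∑ a, ∑ b, ∑ c, ∑ a', ∑ b', ∑ c', (x a b c * y a' b c' * ψ a' b' c' * ψ a b' c + x a b c * ψ a' b c' * y a' b' c' * ψ a b' c + x a b c * ψ a' b c' * ψ a' b' c' * y a b' c + (y a b c * x a' b c' * ψ a' b' c' * ψ a b' c + ψ a b c * x a' b c' * y a' b' c' * ψ a b' c + ψ a b c * x a' b c' * ψ a' b' c' * y a b' c) + (y a b c * ψ a' b c' * x a' b' c' * ψ a b' c + ψ a b c * y a' b c' * x a' b' c' * ψ a b' c + ψ a b c * ψ a' b c' * x a' b' c' * y a b' c) + (y a b c * ψ a' b c' * ψ a' b' c' * x a b' c + ψ a b c * y a' b c' * ψ a' b' c' * x a b' c + ψ a b c * ψ a' b c' * y a' b' c' * x a b' c)))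
       + a3 * (∑ a, ∑ b, ∑ c, ∑ a', ∑ b', ∑ c', (x a b c * y a' b' c * ψ a' b' c' * ψ a b c' + x a b c * ψ a' b' c * y a' b' c' * ψ a b c' + x a b c * ψ a' b' c * ψ a' b' c' * y a b c' + (y a b c * x a' b' c * ψ a' b' c' * ψ a b c' + ψ a b c * x a' b' c * y a' b' c' * ψ a b c' + ψ a b c * x a' b' c * ψ a' b' c' * y a b c') + (y a b c * ψ a' b' c * x a' b' c' * ψ a b c' + ψ a b c * y a' b' c * x a' b' c' * ψ a b c' + ψ a b c * ψ a' b' c * x a' b' c' * y a b c') + (y a b c * ψ a' b' c * ψ a' b' c' * x a b c' + ψ a b c * y a' b' c * ψ a' b' c' * x a b c' + ψ a b c * ψ a' b' c * y a' b' c' * x a b c'))))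
  + lt / (4 * (N : ℝ) ^ ((3 : ℝ) / 2)) * (∑ a, ∑ b, ∑ c, ∑ a', ∑ b', ∑ c', (x a b c * y a b' c' * ψ a' b c' * ψ a' b' c + x a b c * ψ a b' c' * y a' b c' * ψ a' b' c + x a b c * ψ a b' c' * ψ a' b c' * y a' b' c + (y a b c * x a b' c' * ψ a' b c' * ψ a' b' c + ψ a b c * x a b' c' * y a' b c' * ψ a' b' c + ψ a b c * x a b' c' * ψ a' b c' * y a' b' c) + (y a b c * ψ a b' c' * x a' b c' * ψ a' b' c + ψ a b c * y a b' c' * x a' b c' * ψ a' b' c + ψ a b c * ψ a b' c' * x a' b c' * y a' b' c) + (y a b c * ψ a b' c' * ψ a' b c' * x a' b' c + ψ a b c * y a b' c' * ψ a' b c' * x a' b' c + ψ a b c * ψ a b' c' * y a' b c' * x a' b' c)))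


lemma stage1 (N : ℕ) (l2 ld lp lt a1 a2 a3 : ℝ)
    (ψ x : Fin N → Fin N → Fin N → ℝ) :
    HasDerivAt (fun t : ℝ => potV N l2 ld lp lt a1 a2 a3
        (fun a b c => ψ a b c + t * x a b c))
      (dV1 N l2 ld lp lt a1 a2 a3 ψ x) 0 := by
  have hQ : HasDerivAt (fun t : ℝ => ∑ a, ∑ b, ∑ c, (ψ a b c + t * x a b c) ^ 2)
      (∑ a, ∑ b, ∑ c, 2 * ψ a b c * x a b c) 0 :=
    HasDerivAt.fun_sum fun a _ => HasDerivAt.fun_sum fun b _ => HasDerivAt.fun_sum fun c _ => sqD _ _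
  have hQ2 := hQ.fun_pow 2
  norm_num at hQ2
  have hS1 : HasDerivAt (fun t : ℝ => ∑ a, ∑ b, ∑ c, ∑ a', ∑ b', ∑ c', (ψ a b c + t * x a b c) * (ψ a b' c' + t * x a b' c') * (ψ a' b' c' + t * x a' b' c') * (ψ a' b c + t * x a' b c))
      (∑ a, ∑ b, ∑ c, ∑ a', ∑ b', ∑ c', (x a b c * ψ a b' c' * ψ a' b' c' * ψ a' b c + ψ a b c * x a b' c' * ψ a' b' c' * ψ a' b c + ψ a b c * ψ a b' c' * x a' b' c' * ψ a' b c + ψ a b c * ψ a b' c' * ψ a' b' c' * x a' b c)) 0 :=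
    HasDerivAt.fun_sum fun a _ => HasDerivAt.fun_sum fun b _ => HasDerivAt.fun_sum fun c _ =>
    HasDerivAt.fun_sum fun a' _ => HasDerivAt.fun_sum fun b' _ => HasDerivAt.fun_sum fun c' _ =>
      prod4AffD _ _ _ _ _ _ _ _
  have hS2 : HasDerivAt (fun t : ℝ => ∑ a, ∑ b, ∑ c, ∑ a', ∑ b', ∑ c', (ψ a b c + t * x a b c) * (ψ a' b c' + t * x a' b c') * (ψ a' b' c' + t * x a' b' c') * (ψ a b' c + t * x a b' c))
      (∑ a, ∑ b, ∑ c, ∑ a', ∑ b', ∑ c', (x a b c * ψ a' b c' * ψ a' b' c' * ψ a b' c + ψ a b c * x a' b c' * ψ a' b' c' * ψ a b' c + ψ a b c * ψ a' b c' * x a' b' c' * ψ a b' c + ψ a b c * ψ a' b c' * ψ a' b' c' * x a b' c)) 0 :=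
    HasDerivAt.fun_sum fun a _ => HasDerivAt.fun_sum fun b _ => HasDerivAt.fun_sum fun c _ =>
    HasDerivAt.fun_sum fun a' _ => HasDerivAt.fun_sum fun b' _ => HasDerivAt.fun_sum fun c' _ =>
      prod4AffD _ _ _ _ _ _ _ _
  have hS3 : HasDerivAt (fun t : ℝ => ∑ a, ∑ b, ∑ c, ∑ a', ∑ b', ∑ c', (ψ a b c + t * x a b c) * (ψ a' b' c + t * x a' b' c) * (ψ a' b' c' + t * x a' b' c') * (ψ a b c' + t * x a b c'))
      (∑ a, ∑ b, ∑ c, ∑ a', ∑ b', ∑ c', (x a b c * ψ a' b' c * ψ a' b' c' * ψ a b c' + ψ a b c * x a' b' c * ψ a' b' c' * ψ a b c' + ψ a b c * ψ a' b' c * x a' b' c' * ψ a b c' + ψ a b c * ψ a' b' c * ψ a' b' c' * x a b c')) 0 :=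
    HasDerivAt.fun_sum fun a _ => HasDerivAt.fun_sum fun b _ => HasDerivAt.fun_sum fun c _ =>
    HasDerivAt.fun_sum fun a' _ => HasDerivAt.fun_sum fun b' _ => HasDerivAt.fun_sum fun c' _ =>
      prod4AffD _ _ _ _ _ _ _ _
  have hSt : HasDerivAt (fun t : ℝ => ∑ a, ∑ b, ∑ c, ∑ a', ∑ b', ∑ c', (ψ a b c + t * x a b c) * (ψ a b' c' + t * x a b' c') * (ψ a' b c' + t * x a' b c') * (ψ a' b' c + t * x a' b' c))
      (∑ a, ∑ b, ∑ c, ∑ a', ∑ b', ∑ c', (x a b c * ψ a b' c' * ψ a' b c' * ψ a' b' c + ψ a b c * x a b' c' * ψ a' b c' * ψ a' b' c + ψ a b c * ψ a b' c' * x a' b c' * ψ a' b' c + ψ a b c * ψ a b' c' * ψ a' b c' * x a' b' c)) 0 :=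
    HasDerivAt.fun_sum fun a _ => HasDerivAt.fun_sum fun b _ => HasDerivAt.fun_sum fun c _ =>
    HasDerivAt.fun_sum fun a' _ => HasDerivAt.fun_sum fun b' _ => HasDerivAt.fun_sum fun c' _ =>
      prod4AffD _ _ _ _ _ _ _ _
  have H := (((hQ.const_mul (l2 / 2)).fun_add (hQ2.const_mul (ld / (4 * (N : ℝ) ^ 3)))).fun_add
      ((((hS1.const_mul a1).fun_add (hS2.const_mul a2)).fun_add (hS3.const_mul a3)).const_mul
        (lp / (4 * (N : ℝ) ^ 2)))).fun_add
      (hSt.const_mul (lt / (4 * (N : ℝ) ^ ((3 : ℝ) / 2))))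
  simp only [potV, dV1]
  convert! H using 1
  all_goals ring

lemma stage2 (N : ℕ) (l2 ld lp lt a1 a2 a3 : ℝ)
    (ψ y x : Fin N → Fin N → Fin N → ℝ) :
    HasDerivAt (fun s : ℝ => dV1 N l2 ld lp lt a1 a2 a3
        (fun a b c => ψ a b c + s * y a b c) x)
      (dV2 N l2 ld lp lt a1 a2 a3 ψ y x) 0 := by
  have hQ : HasDerivAt (fun s : ℝ => ∑ a, ∑ b, ∑ c, (ψ a b c + s * y a b c) ^ 2)
      (∑ a, ∑ b, ∑ c, 2 * ψ a b c * y a b c) 0 :=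
    HasDerivAt.fun_sum fun a _ => HasDerivAt.fun_sum fun b _ => HasDerivAt.fun_sum fun c _ => sqD _ _
  have hR : HasDerivAt (fun s : ℝ => ∑ a, ∑ b, ∑ c, 2 * (ψ a b c + s * y a b c) * x a b c)
      (∑ a, ∑ b, ∑ c, 2 * y a b c * x a b c) 0 :=
    HasDerivAt.fun_sum fun a _ => HasDerivAt.fun_sum fun b _ => HasDerivAt.fun_sum fun c _ => lin2 _ _ _
  have hQR := (hQ.const_mul 2).fun_mul hR
  simp only [zero_mul, add_zero] at hQR
  have hS1 : HasDerivAt (fun s : ℝ => ∑ a, ∑ b, ∑ c, ∑ a', ∑ b', ∑ c', (x a b c * (ψ a b' c' + s * y a b' c') * (ψ a' b' c' + s * y a' b' c') * (ψ a' b c + s * y a' b c) + (ψ a b c + s * y a b c) * x a b' c' * (ψ a' b' c' + s * y a' b' c') * (ψ a' b c + s * y a' b c) + (ψ a b c + s * y a b c) * (ψ a b' c' + s * y a b' c') * x a' b' c' * (ψ a' b c + s * y a' b c) + (ψ a b c + s * y a b c) * (ψ a b' c' + s * y a b' c') * (ψ a' b' c' + s * y a' b' c') * x a' b c))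
      (∑ a, ∑ b, ∑ c, ∑ a', ∑ b', ∑ c', (x a b c * y a b' c' * ψ a' b' c' * ψ a' b c + x a b c * ψ a b' c' * y a' b' c' * ψ a' b c + x a b c * ψ a b' c' * ψ a' b' c' * y a' b c + (y a b c * x a b' c' * ψ a' b' c' * ψ a' b c + ψ a b c * x a b' c' * y a' b' c' * ψ a' b c + ψ a b c * x a b' c' * ψ a' b' c' * y a' b c) + (y a b c * ψ a b' c' * x a' b' c' * ψ a' b c + ψ a b c * y a b' c' * x a' b' c' * ψ a' b c + ψ a b c * ψ a b' c' * x a' b' c' * y a' b c) + (y a b c * ψ a b' c' * ψ a' b' c' * x a' b c + ψ a b c * y a b' c' * ψ a' b' c' * x a' b c + ψ a b c * ψ a b' c' * y a' b' c' * x a' b c))) 0 :=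
    HasDerivAt.fun_sum fun a _ => HasDerivAt.fun_sum fun b _ => HasDerivAt.fun_sum fun c _ =>
    HasDerivAt.fun_sum fun a' _ => HasDerivAt.fun_sum fun b' _ => HasDerivAt.fun_sum fun c' _ =>
      (((cp1 _ _ _ _ _ _ _).fun_add (cp2 _ _ _ _ _ _ _)).fun_add (cp3 _ _ _ _ _ _ _)).fun_add
        (cp4 _ _ _ _ _ _ _)
  have hS2 : HasDerivAt (fun s : ℝ => ∑ a, ∑ b, ∑ c, ∑ a', ∑ b', ∑ c', (x a b c * (ψ a' b c' + s * y a' b c') * (ψ a' b' c' + s * y a' b' c') * (ψ a b' c + s * y a b' c) + (ψ a b c + s * y a b c) * x a' b c' * (ψ a' b' c' + s * y a' b' c') * (ψ a b' c + s * y a b' c) + (ψ a b c + s * y a b c) * (ψ a' b c' + s * y a' b c') * x a' b' c' * (ψ a b' c + s * y a b' c) + (ψ a b c + s * y a b c) * (ψ a' b c' + s * y a' b c') * (ψ a' b' c' + s * y a' b' c') * x a b' c))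
      (∑ a, ∑ b, ∑ c, ∑ a', ∑ b', ∑ c', (x a b c * y a' b c' * ψ a' b' c' * ψ a b' c + x a b c * ψ a' b c' * y a' b' c' * ψ a b' c + x a b c * ψ a' b c' * ψ a' b' c' * y a b' c + (y a b c * x a' b c' * ψ a' b' c' * ψ a b' c + ψ a b c * x a' b c' * y a' b' c' * ψ a b' c + ψ a b c * x a' b c' * ψ a' b' c' * y a b' c) + (y a b c * ψ a' b c' * x a' b' c' * ψ a b' c + ψ a b c * y a' b c' * x a' b' c' * ψ a b' c + ψ a b c * ψ a' b c' * x a' b' c' * y a b' c) + (y a b c * ψ a' b c' * ψ a' b' c' * x a b' c + ψ a b c * y a' b c' * ψ a' b' c' * x a b' c + ψ a b c * ψ a' b c' * y a' b' c' * x a b' c))) 0 :=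
    HasDerivAt.fun_sum fun a _ => HasDerivAt.fun_sum fun b _ => HasDerivAt.fun_sum fun c _ =>
    HasDerivAt.fun_sum fun a' _ => HasDerivAt.fun_sum fun b' _ => HasDerivAt.fun_sum fun c' _ =>
      (((cp1 _ _ _ _ _ _ _).fun_add (cp2 _ _ _ _ _ _ _)).fun_add (cp3 _ _ _ _ _ _ _)).fun_add
        (cp4 _ _ _ _ _ _ _)
  have hS3 : HasDerivAt (fun s : ℝ => ∑ a, ∑ b, ∑ c, ∑ a', ∑ b', ∑ c', (x a b c * (ψ a' b' c + s * y a' b' c) * (ψ a' b' c' + s * y a' b' c') * (ψ a b c' + s * y a b c') + (ψ a b c + s * y a b c) * x a' b' c * (ψ a' b' c' + s * y a' b' c') * (ψ a b c' + s * y a b c') + (ψ a b c + s * y a b c) * (ψ a' b' c + s * y a' b' c) * x a' b' c' * (ψ a b c' + s * y a b c') + (ψ a b c + s * y a b c) * (ψ a' b' c + s * y a' b' c) * (ψ a' b' c' + s * y a' b' c') * x a b c'))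
      (∑ a, ∑ b, ∑ c, ∑ a', ∑ b', ∑ c', (x a b c * y a' b' c * ψ a' b' c' * ψ a b c' + x a b c * ψ a' b' c * y a' b' c' * ψ a b c' + x a b c * ψ a' b' c * ψ a' b' c' * y a b c' + (y a b c * x a' b' c * ψ a' b' c' * ψ a b c' + ψ a b c * x a' b' c * y a' b' c' * ψ a b c' + ψ a b c * x a' b' c * ψ a' b' c' * y a b c') + (y a b c * ψ a' b' c * x a' b' c' * ψ a b c' + ψ a b c * y a' b' c * x a' b' c' * ψ a b c' + ψ a b c * ψ a' b' c * x a' b' c' * y a b c') + (y a b c * ψ a' b' c * ψ a' b' c' * x a b c' + ψ a b c * y a' b' c * ψ a' b' c' * x a b c' + ψ a b c * ψ a' b' c * y a' b' c' * x a b c'))) 0 :=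
    HasDerivAt.fun_sum fun a _ => HasDerivAt.fun_sum fun b _ => HasDerivAt.fun_sum fun c _ =>
    HasDerivAt.fun_sum fun a' _ => HasDerivAt.fun_sum fun b' _ => HasDerivAt.fun_sum fun c' _ =>
      (((cp1 _ _ _ _ _ _ _).fun_add (cp2 _ _ _ _ _ _ _)).fun_add (cp3 _ _ _ _ _ _ _)).fun_add
        (cp4 _ _ _ _ _ _ _)
  have hSt : HasDerivAt (fun s : ℝ => ∑ a, ∑ b, ∑ c, ∑ a', ∑ b', ∑ c', (x a b c * (ψ a b' c' + s * y a b' c') * (ψ a' b c' + s * y a' b c') * (ψ a' b' c + s * y a' b' c) + (ψ a b c + s * y a b c) * x a b' c' * (ψ a' b c' + s * y a' b c') * (ψ a' b' c + s * y a' b' c) + (ψ a b c + s * y a b c) * (ψ a b' c' + s * y a b' c') * x a' b c' * (ψ a' b' c + s * y a' b' c) + (ψ a b c + s * y a b c) * (ψ a b' c' + s * y a b' c') * (ψ a' b c' + s * y a' b c') * x a' b' c))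
      (∑ a, ∑ b, ∑ c, ∑ a', ∑ b', ∑ c', (x a b c * y a b' c' * ψ a' b c' * ψ a' b' c + x a b c * ψ a b' c' * y a' b c' * ψ a' b' c + x a b c * ψ a b' c' * ψ a' b c' * y a' b' c + (y a b c * x a b' c' * ψ a' b c' * ψ a' b' c + ψ a b c * x a b' c' * y a' b c' * ψ a' b' c + ψ a b c * x a b' c' * ψ a' b c' * y a' b' c) + (y a b c * ψ a b' c' * x a' b c' * ψ a' b' c + ψ a b c * y a b' c' * x a' b c' * ψ a' b' c + ψ a b c * ψ a b' c' * x a' b c' * y a' b' c) + (y a b c * ψ a b' c' * ψ a' b c' * x a' b' c + ψ a b c * y a b' c' * ψ a' b c' * x a' b' c + ψ a b c * ψ a b' c' * y a' b c' * x a' b' c))) 0 :=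
    HasDerivAt.fun_sum fun a _ => HasDerivAt.fun_sum fun b _ => HasDerivAt.fun_sum fun c _ =>
    HasDerivAt.fun_sum fun a' _ => HasDerivAt.fun_sum fun b' _ => HasDerivAt.fun_sum fun c' _ =>
      (((cp1 _ _ _ _ _ _ _).fun_add (cp2 _ _ _ _ _ _ _)).fun_add (cp3 _ _ _ _ _ _ _)).fun_add
        (cp4 _ _ _ _ _ _ _)
  have H := (((hR.const_mul (l2 / 2)).fun_add (hQR.const_mul (ld / (4 * (N : ℝ) ^ 3)))).fun_add
      ((((hS1.const_mul a1).fun_add (hS2.const_mul a2)).fun_add (hS3.const_mul a3)).const_mul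
        (lp / (4 * (N : ℝ) ^ 2)))).fun_add
      (hSt.const_mul (lt / (4 * (N : ℝ) ^ ((3 : ℝ) / 2))))
  simp only [dV1, dV2]
  convert! H using 1
  all_goals ring

lemma hessApply_eq (N : ℕ) (l2 ld lp lt a1 a2 a3 : ℝ)
    (φ χ : Fin N → Fin N → Fin N → ℝ) (a : Fin N) (b : Fin N) (c : Fin N) :
    hessApply N l2 ld lp lt a1 a2 a3 φ χ a b c
      = dV2 N l2 ld lp lt a1 a2 a3 φ
          (fun a' b' c' => if a' = a ∧ b' = b ∧ c' = c then (1 : ℝ) else 0) χ := by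
  unfold hessApply
  have h1 : (fun s : ℝ => deriv (fun t : ℝ =>
        potV N l2 ld lp lt a1 a2 a3
          (fun a' b' c' => φ a' b' c' + t * χ a' b' c'
            + s * (if a' = a ∧ b' = b ∧ c' = c then (1 : ℝ) else 0))) 0)
      = fun s : ℝ => dV1 N l2 ld lp lt a1 a2 a3
          (fun a' b' c' => φ a' b' c'
            + s * (if a' = a ∧ b' = b ∧ c' = c then (1 : ℝ) else 0)) χ := by
    funext s
    have h2 : (fun t : ℝ =>
        potV N l2 ld lp lt a1 a2 a3
          (fun a' b' c' => φ a' b' c' + t * χ a' b' c'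
            + s * (if a' = a ∧ b' = b ∧ c' = c then (1 : ℝ) else 0)))
        = fun t : ℝ =>
        potV N l2 ld lp lt a1 a2 a3
          (fun a' b' c' => (φ a' b' c'
            + s * (if a' = a ∧ b' = b ∧ c' = c then (1 : ℝ) else 0)) + t * χ a' b' c') := by
      funext t
      congr 1
      funext a' b' c'
      ring
    rw [h2]
    exact (stage1 N l2 ld lp lt a1 a2 a3
      (fun a' b' c' => φ a' b' c'
        + s * (if a' = a ∧ b' = b ∧ c' = c then (1 : ℝ) else 0)) χ).deriv
  rw [h1]
  exact (stage2 N l2 ld lp lt a1 a2 a3 φ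
    (fun a' b' c' => if a' = a ∧ b' = b ∧ c' = c then (1 : ℝ) else 0) χ).deriv

lemma sum_if_pull {α : Type*} (s : Finset α) (p : Prop) [Decidable p] (f g : α → ℝ) :
    (∑ x ∈ s, if p then f x else g x) = if p then ∑ x ∈ s, f x else ∑ x ∈ s, g x := by
  split <;> rfl

set_option maxHeartbeats 4000000 in
/-- Zero modes of the Hessian at the solution `φ_{abc} = u_a δ_{bc}`: tensors `u ⊗ A` for
antisymmetric `A`, and `u' ⊗ δ` for `u' ⊥ u`. -/
theorem vector_delta_zero_modes (N : ℕ) (hN : 1 ≤ N)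
    (l2 ld lp lt a1 a2 a3 : ℝ)
    (u : Fin N → ℝ)
    (φ : Fin N → Fin N → Fin N → ℝ)
    (hφ : φ = fun a b c => u a * (if b = c then (1 : ℝ) else 0))
    (D' : ℝ)
    (hD' : D' = ld + lp * ((N : ℝ) * a1 + a2 + a3) + (N : ℝ) ^ ((1 : ℝ) / 2) * lt)
    (hsol : l2 + D' / (N : ℝ) ^ 2 * (∑ a, (u a) ^ 2) = 0) :
    (∀ A : Fin N → Fin N → ℝ, (∀ b c, A b c = -A c b) →
      hessApply N l2 ld lp lt a1 a2 a3 φ (fun a b c => u a * A b c) = 0)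
    ∧ (∀ u' : Fin N → ℝ, (∑ a, u' a * u a) = 0 →
      hessApply N l2 ld lp lt a1 a2 a3 φ
        (fun a b c => u' a * (if b = c then (1 : ℝ) else 0)) = 0) := by
  have hN0 : (0:ℝ) < (N:ℝ) := by
    have : 0 < N := hN
    exact_mod_cast this
  subst hφ
  constructor
  · intro A hA
    funext a b c
    simp only [Pi.zero_apply]
    rw [hessApply_eq]
    have hAd : ∀ b, A b b = 0 := fun b => by have := hA b b; linarith
    simp only [dV2, ite_and]
    simp (config := { maxSteps := 100000000 }) [Finset.sum_ite_eq, Finset.sum_ite_eq',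
      mul_ite, ite_mul, mul_zero, zero_mul, mul_one, one_mul, mul_pow, hAd, sum_if_pull,
      Finset.sum_add_distrib, Finset.sum_const_zero]
    have h1 : A c b = -A b c := hA c b
    simp only [h1]
    rw [show (∑ x : Fin N, ↑N * u x ^ 2) = (∑ x : Fin N, u x ^ 2) * (↑N * 1) from by
      rw [Finset.sum_mul]; exact Finset.sum_congr rfl fun x _ => by ring]
    rw [show (∑ x : Fin N, ↑N * (u x * A b c * u x * u a)) = (∑ x : Fin N, u x ^ 2) * (↑N * (1 * A b c * 1 * u a)) from by
      rw [Finset.sum_mul]; exact Finset.sum_congr rfl fun x _ => by ring]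
    rw [show (∑ x : Fin N, ↑N * (u x * (u x * A b c) * u a)) = (∑ x : Fin N, u x ^ 2) * (↑N * (1 * (1 * A b c) * u a)) from by
      rw [Finset.sum_mul]; exact Finset.sum_congr rfl fun x _ => by ring]
    rw [show (∑ x : Fin N, u a * (u x * A b c) * u x) = (∑ x : Fin N, u x ^ 2) * (u a * (1 * A b c) * 1) from by
      rw [Finset.sum_mul]; exact Finset.sum_congr rfl fun x _ => by ring]
    rw [show (∑ x : Fin N, ↑N * (u a * u x * (u x * A b c))) = (∑ x : Fin N, u x ^ 2) * (↑N * (u a * 1 * (1 * A b c))) from by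
      rw [Finset.sum_mul]; exact Finset.sum_congr rfl fun x _ => by ring]
    rw [show (∑ x : Fin N, u x * A b c * u a * u x) = (∑ x : Fin N, u x ^ 2) * (1 * A b c * u a * 1) from by
      rw [Finset.sum_mul]; exact Finset.sum_congr rfl fun x _ => by ring]
    rw [show (∑ x : Fin N, u x * -A b c * u a * u x) = (∑ x : Fin N, u x ^ 2) * (1 * -A b c * u a * 1) from by
      rw [Finset.sum_mul]; exact Finset.sum_congr rfl fun x _ => by ring]
    rw [show (∑ x : Fin N, u a * A b c * u x * u x) = (∑ x : Fin N, u x ^ 2) * (u a * A b c * 1 * 1) from by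
      rw [Finset.sum_mul]; exact Finset.sum_congr rfl fun x _ => by ring]
    rw [show (∑ x : Fin N, u x * A b c * u x * u a) = (∑ x : Fin N, u x ^ 2) * (1 * A b c * 1 * u a) from by
      rw [Finset.sum_mul]; exact Finset.sum_congr rfl fun x _ => by ring]
    rw [show (∑ x : Fin N, u x * (u a * A b c) * u x) = (∑ x : Fin N, u x ^ 2) * (1 * (u a * A b c) * 1) from by
      rw [Finset.sum_mul]; exact Finset.sum_congr rfl fun x _ => by ring]
    rw [show (∑ x : Fin N, u a * (u x * -A b c) * u x) = (∑ x : Fin N, u x ^ 2) * (u a * (1 * -A b c) * 1) from by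
      rw [Finset.sum_mul]; exact Finset.sum_congr rfl fun x _ => by ring]
    rw [show (∑ x : Fin N, u x * (u x * -A b c) * u a) = (∑ x : Fin N, u x ^ 2) * (1 * (1 * -A b c) * u a) from by
      rw [Finset.sum_mul]; exact Finset.sum_congr rfl fun x _ => by ring]
    rw [show (∑ x : Fin N, u a * u x * (u x * A b c)) = (∑ x : Fin N, u x ^ 2) * (u a * 1 * (1 * A b c)) from by
      rw [Finset.sum_mul]; exact Finset.sum_congr rfl fun x _ => by ring]
    rw [show (∑ x : Fin N, u x * u x * (u a * A b c)) = (∑ x : Fin N, u x ^ 2) * (1 * 1 * (u a * A b c)) from by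
      rw [Finset.sum_mul]; exact Finset.sum_congr rfl fun x _ => by ring]
    rw [show (∑ x : Fin N, u x * u a * (u x * -A b c)) = (∑ x : Fin N, u x ^ 2) * (1 * u a * (1 * -A b c)) from by
      rw [Finset.sum_mul]; exact Finset.sum_congr rfl fun x _ => by ring]
    rw [show (∑ x : Fin N, u x * u a * (u x * A b c)) = (∑ x : Fin N, u x ^ 2) * (1 * u a * (1 * A b c)) from by
      rw [Finset.sum_mul]; exact Finset.sum_congr rfl fun x _ => by ring]
    rw [show (∑ x : Fin N, u a * -A b c * u x * u x) = (∑ x : Fin N, u x ^ 2) * (u a * -A b c * 1 * 1) from by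
      rw [Finset.sum_mul]; exact Finset.sum_congr rfl fun x _ => by ring]
    rw [show (∑ x : Fin N, u x * (u x * A b c) * u a) = (∑ x : Fin N, u x ^ 2) * (1 * (1 * A b c) * u a) from by
      rw [Finset.sum_mul]; exact Finset.sum_congr rfl fun x _ => by ring]
    rw [show (∑ x : Fin N, u x * u x * (u a * -A b c)) = (∑ x : Fin N, u x ^ 2) * (1 * 1 * (u a * -A b c)) from by
      rw [Finset.sum_mul]; exact Finset.sum_congr rfl fun x _ => by ring]
    have hl2 : l2 = -(D' / (N : ℝ) ^ 2 * ∑ a, (u a) ^ 2) := by linarith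
    rw [hl2, hD']
    rw [show (N:ℝ) ^ ((3:ℝ)/2) = (N:ℝ) ^ ((1:ℝ)/2) * (N:ℝ) from by
      rw [show (3:ℝ)/2 = (1:ℝ)/2 + 1 by norm_num, Real.rpow_add hN0, Real.rpow_one]]
    set r := (N:ℝ) ^ ((1:ℝ)/2) with hr
    have hr2 : r * r = (N:ℝ) := by rw [hr, ← Real.rpow_add hN0]; norm_num
    have hrpos : (0:ℝ) < r := Real.rpow_pos_of_pos hN0 _
    rw [← hr2]
    field_simp
    ring
  · intro u' hu
    funext a b c
    simp only [Pi.zero_apply]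
    rw [hessApply_eq]
    simp only [dV2, ite_and]
    simp (config := { maxSteps := 100000000 }) [Finset.sum_ite_eq, Finset.sum_ite_eq',
      mul_ite, ite_mul, mul_zero, zero_mul, mul_one, one_mul, mul_pow,
      sum_if_pull, Finset.sum_add_distrib, Finset.sum_const_zero]
    by_cases hbc : b = c
    · subst hbc
      simp only [eq_self_iff_true, if_true]
      rw [show (∑ x : Fin N, ↑N * (2 * u x * u' x)) = (∑ x : Fin N, u' x * u x) * (↑N * (2 * 1 * 1)) from by
        rw [Finset.sum_mul]; exact Finset.sum_congr rfl fun x _ => by ring]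
      rw [show (∑ x : Fin N, ↑N * u x ^ 2) = (∑ x : Fin N, u x ^ 2) * (↑N * 1) from by
        rw [Finset.sum_mul]; exact Finset.sum_congr rfl fun x _ => by ring]
      rw [show (∑ x : Fin N, u' a * u x * u x) = (∑ x : Fin N, u x ^ 2) * (u' a * 1 * 1) from by
        rw [Finset.sum_mul]; exact Finset.sum_congr rfl fun x _ => by ring]
      rw [show (∑ x : Fin N, ↑N * (u' x * u x * u a)) = (∑ x : Fin N, u' x * u x) * (↑N * (1 * 1 * u a)) from by
        rw [Finset.sum_mul]; exact Finset.sum_congr rfl fun x _ => by ring]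
      rw [show (∑ x : Fin N, ↑N * (u' a * u x * u x)) = (∑ x : Fin N, u x ^ 2) * (↑N * (u' a * 1 * 1)) from by
        rw [Finset.sum_mul]; exact Finset.sum_congr rfl fun x _ => by ring]
      rw [show (∑ x : Fin N, ↑N * (u x * u' x * u a)) = (∑ x : Fin N, u' x * u x) * (↑N * (1 * 1 * u a)) from by
        rw [Finset.sum_mul]; exact Finset.sum_congr rfl fun x _ => by ring]
      rw [show (∑ x : Fin N, ↑N * (u a * u' x * u x)) = (∑ x : Fin N, u' x * u x) * (↑N * (u a * 1 * 1)) from by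
        rw [Finset.sum_mul]; exact Finset.sum_congr rfl fun x _ => by ring]
      rw [show (∑ x : Fin N, u a * u' x * u x) = (∑ x : Fin N, u' x * u x) * (u a * 1 * 1) from by
        rw [Finset.sum_mul]; exact Finset.sum_congr rfl fun x _ => by ring]
      rw [show (∑ x : Fin N, ↑N * (u x * u x * u' a)) = (∑ x : Fin N, u x ^ 2) * (↑N * (1 * 1 * u' a)) from by
        rw [Finset.sum_mul]; exact Finset.sum_congr rfl fun x _ => by ring]
      rw [show (∑ x : Fin N, ↑N * (u a * u x * u' x)) = (∑ x : Fin N, u' x * u x) * (↑N * (u a * 1 * 1)) from by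
        rw [Finset.sum_mul]; exact Finset.sum_congr rfl fun x _ => by ring]
      rw [show (∑ x : Fin N, u a * u x * u' x) = (∑ x : Fin N, u' x * u x) * (u a * 1 * 1) from by
        rw [Finset.sum_mul]; exact Finset.sum_congr rfl fun x _ => by ring]
      rw [show (∑ x : Fin N, u' x * u a * u x) = (∑ x : Fin N, u' x * u x) * (1 * u a * 1) from by
        rw [Finset.sum_mul]; exact Finset.sum_congr rfl fun x _ => by ring]
      rw [show (∑ x : Fin N, u' x * u x * u a) = (∑ x : Fin N, u' x * u x) * (1 * 1 * u a) from by
        rw [Finset.sum_mul]; exact Finset.sum_congr rfl fun x _ => by ring]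
      rw [show (∑ x : Fin N, u x * u' a * u x) = (∑ x : Fin N, u x ^ 2) * (1 * u' a * 1) from by
        rw [Finset.sum_mul]; exact Finset.sum_congr rfl fun x _ => by ring]
      rw [show (∑ x : Fin N, u x * u' x * u a) = (∑ x : Fin N, u' x * u x) * (1 * 1 * u a) from by
        rw [Finset.sum_mul]; exact Finset.sum_congr rfl fun x _ => by ring]
      rw [show (∑ x : Fin N, u x * u x * u' a) = (∑ x : Fin N, u x ^ 2) * (1 * 1 * u' a) from by
        rw [Finset.sum_mul]; exact Finset.sum_congr rfl fun x _ => by ring]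
      rw [show (∑ x : Fin N, u x * u a * u' x) = (∑ x : Fin N, u' x * u x) * (1 * u a * 1) from by
        rw [Finset.sum_mul]; exact Finset.sum_congr rfl fun x _ => by ring]
      rw [hu]
      have hl2 : l2 = -(D' / (N : ℝ) ^ 2 * ∑ a, (u a) ^ 2) := by linarith
      rw [hl2, hD']
      rw [show (N:ℝ) ^ ((3:ℝ)/2) = (N:ℝ) ^ ((1:ℝ)/2) * (N:ℝ) from by
        rw [show (3:ℝ)/2 = (1:ℝ)/2 + 1 by norm_num, Real.rpow_add hN0, Real.rpow_one]]
      set r := (N:ℝ) ^ ((1:ℝ)/2) with hr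
      have hr2 : r * r = (N:ℝ) := by rw [hr, ← Real.rpow_add hN0]; norm_num
      have hrpos : (0:ℝ) < r := Real.rpow_pos_of_pos hN0 _
      rw [← hr2]
      field_simp
      ring
    · simp [hbc, Ne.symm hbc]
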